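/- arXiv:2009.14745 — 3 statements merged into one kernel-verified Lean document; each statement's English description precedes it below -/
import Mathlib

section
/- Let (𝒯, d) be a metric space that is isometrically embeddable into (ℝⁿ, ℓ¹), i.e., there is a map i : 𝒯 → ℝⁿ with d(s₁,s₂) = ‖i(s₁) − i(s₂)‖₁ for all s₁,s₂ ∈ 𝒯. Suppose f : [0,∞) → ℝ is such that (x,y) ↦ f(‖x−y‖₁) is positive definite on ℝ^{n+1}. Then for any α, β > 0, the function C((s₁,t₁),(s₂,t₂)) = f(d(s₁,s₂)/α + |t₁−t₂|/β) is positive definite on 𝒯 × ℝ. -/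
open Real Set Finset

theorem stmt_6 {T : Type*} [MetricSpace T] (n : ℕ) (i : T → (Fin n → ℝ))
    (hi : ∀ s₁ s₂ : T, dist s₁ s₂ = ∑ k, |i s₁ k - i s₂ k|)
    (f : ℝ → ℝ)
    (hf : ∀ (N : ℕ) (a : Fin N → ℝ) (x : Fin N → (Fin (n + 1) → ℝ)),
      0 ≤ ∑ k, ∑ l, a k * a l * f (∑ m, |x k m - x l m|))
    (α β : ℝ) (hα : 0 < α) (hβ : 0 < β) :
    ∀ (N : ℕ) (a : Fin N → ℝ) (p : Fin N → T × ℝ),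
      0 ≤ ∑ k, ∑ l, a k * a l *
        f (dist (p k).1 (p l).1 / α + |(p k).2 - (p l).2| / β) := by
  intro N a p
  have h := hf N a (fun k => Fin.cons ((p k).2 / β) (fun m => i (p k).1 m / α))
  convert h using 4 with k _ l _
  congr 1
  rw [Fin.sum_univ_succ]
  simp only [Fin.cons_zero, Fin.cons_succ]
  rw [hi, Finset.sum_div]
  have hsum : ∀ m : Fin n, |i (p k).1 m / α - i (p l).1 m / α|
      = |i (p k).1 m - i (p l).1 m| / α := by
    intro m
    rw [div_sub_div_same, abs_div, abs_of_pos hα]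
  have ht : |(p k).2 / β - (p l).2 / β| = |(p k).2 - (p l).2| / β := by
    rw [div_sub_div_same, abs_div, abs_of_pos hβ]
  simp_rw [hsum, ht]
  ring
end

section
/- Let g(x) = θ₁·exp(−x/θ₂) for x ≥ 0 with θ₁, θ₂ > 0. Then for all a, b ≥ 0 with d = a + b: ∫_{−∞}^{−d} g(−x)·g(−x − d) dx = ∫_{−∞}^{−b} g(−x)·g(−x − (b−a)) dx = (θ₁²θ₂/2)·exp(−d/θ₂). In particular the tail-down covariance with exponential kernel depends on the total stream distance d alone. -/
open Real Set MeasureTheory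

lemma int_exp_Iio (k c : ℝ) (hk : 0 < k) :
    ∫ x in Iio c, Real.exp (k * x) = Real.exp (k * c) / k := by
  rw [← integral_Iic_eq_integral_Iio]
  have h1 : (∫ x in Iic c, Real.exp (k * x))
      = ∫ x in Ioi (-c), Real.exp (-(k * x)) := by
    rw [← neg_neg c, ← integral_comp_neg_Iic]
    congr 1
    ext x
    ring_nf
  rw [h1]
  have h2 := integral_comp_mul_left_Ioi (fun y => Real.exp (-y)) (-c) hk
  rw [h2, integral_exp_neg_Ioi, smul_eq_mul, mul_neg, neg_neg]
  field_simp

lemma key_int (θ₁ θ₂ : ℝ) (h2 : 0 < θ₂) (c e : ℝ) :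
    (∫ x in Iio c, (θ₁ * Real.exp (x / θ₂)) * (θ₁ * Real.exp ((x + e) / θ₂)))
      = θ₁ ^ 2 * θ₂ / 2 * Real.exp ((2 * c + e) / θ₂) := by
  have hcong : ∀ x : ℝ, (θ₁ * Real.exp (x / θ₂)) * (θ₁ * Real.exp ((x + e) / θ₂))
      = (θ₁ ^ 2 * Real.exp (e / θ₂)) * Real.exp ((2 / θ₂) * x) := by
    intro x
    have h : Real.exp (x / θ₂) * Real.exp ((x + e) / θ₂)
        = Real.exp (e / θ₂) * Real.exp (2 / θ₂ * x) := by
      rw [← Real.exp_add, ← Real.exp_add]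
      congr 1
      field_simp
      ring
    linear_combination θ₁ ^ 2 * h
  simp_rw [hcong]
  rw [MeasureTheory.integral_const_mul, int_exp_Iio (2 / θ₂) c (by positivity)]
  have hex : Real.exp ((2 * c + e) / θ₂) = Real.exp (e / θ₂) * Real.exp (2 / θ₂ * c) := by
    rw [← Real.exp_add]
    congr 1
    field_simp
    ring
  rw [hex]
  field_simp

theorem stmt_12 (θ₁ θ₂ : ℝ) (h1 : 0 < θ₁) (h2 : 0 < θ₂)
    (g : ℝ → ℝ) (hg : ∀ x : ℝ, g x = θ₁ * Real.exp (-x / θ₂))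
    (a b d : ℝ) (ha : 0 ≤ a) (hb : 0 ≤ b) (hd : d = a + b) :
    (∫ x in Iio (-d), g (-x) * g (-x - d))
        = θ₁ ^ 2 * θ₂ / 2 * Real.exp (-d / θ₂) ∧
    (∫ x in Iio (-b), g (-x) * g (-x - (b - a)))
        = θ₁ ^ 2 * θ₂ / 2 * Real.exp (-d / θ₂) := by
  constructor
  · have h := key_int θ₁ θ₂ h2 (-d) d
    have he : (2 * (-d) + d) / θ₂ = -d / θ₂ := by ring_nf
    rw [he] at h
    rw [← h]
    congr 1
    ext x
    rw [hg, hg]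
    congr 2 <;> ring
  · have h := key_int θ₁ θ₂ h2 (-b) (b - a)
    have he : (2 * (-b) + (b - a)) / θ₂ = -d / θ₂ := by rw [hd]; ring_nf
    rw [he] at h
    rw [← h]
    congr 1
    ext x
    rw [hg, hg]
    congr 2 <;> ring
end

section
/- For all α, β > 0, ν ∈ (0,1], integer n ≥ 1, and δ ≥ 2n + 1, consider f(x) = (max(0, 1 − x^ν))^δ for x ≥ 0. If (x,y) ↦ f(‖x−y‖₁) is positive definite on ℝ^{n+1} for δ ≥ 2(n+1) − 1 and ν ∈ (0,1], then for any metric space (T,d) isometrically ℓ¹-embeddable into ℝⁿ, the kernel C((s₁,t₁),(s₂,t₂)) = (max(0, 1 − (d(s₁,s₂)/α + |t₁−t₂|/β)^ν))^δ is positive definite on T × ℝ. -/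
open Real Set Finset

theorem stmt_19 {T : Type*} [MetricSpace T] (n : ℕ) (hn : 1 ≤ n)
    (α β ν δ : ℝ) (hα : 0 < α) (hβ : 0 < β)
    (hν : 0 < ν) (hν' : ν ≤ 1) (hδ : 2 * (n : ℝ) + 1 ≤ δ)
    (i : T → (Fin n → ℝ))
    (hi : ∀ s₁ s₂ : T, dist s₁ s₂ = ∑ k, |i s₁ k - i s₂ k|)
    (hf : ∀ (N : ℕ) (a : Fin N → ℝ) (x : Fin N → (Fin (n + 1) → ℝ)),
      0 ≤ ∑ k, ∑ l, a k * a l *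
        (max 0 (1 - (∑ m, |x k m - x l m|) ^ ν)) ^ δ) :
    ∀ (N : ℕ) (a : Fin N → ℝ) (p : Fin N → T × ℝ),
      0 ≤ ∑ k, ∑ l, a k * a l *
        (max 0 (1 - (dist (p k).1 (p l).1 / α + |(p k).2 - (p l).2| / β) ^ ν)) ^ δ := by
  intro N a p
  have key := hf N a (fun k => Fin.cons ((p k).2 / β) (fun m => i (p k).1 m / α))
  have eq1 : ∀ k l : Fin N,
      (∑ m : Fin (n + 1), |Fin.cons ((p k).2 / β) (fun m => i (p k).1 m / α) m -
        Fin.cons ((p l).2 / β) (fun m => i (p l).1 m / α) m|)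
      = dist (p k).1 (p l).1 / α + |(p k).2 - (p l).2| / β := by
    intro k l
    rw [Fin.sum_univ_succ]
    simp only [Fin.cons_zero, Fin.cons_succ]
    rw [hi, sum_div]
    have h1 : |(p k).2 / β - (p l).2 / β| = |(p k).2 - (p l).2| / β := by
      rw [div_sub_div_same, abs_div, abs_of_pos hβ]
    have h2 : ∀ m : Fin n, |i (p k).1 m / α - i (p l).1 m / α|
        = |i (p k).1 m - i (p l).1 m| / α := by
      intro m
      rw [div_sub_div_same, abs_div, abs_of_pos hα]
    rw [h1]
    simp_rw [h2]
    ring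
  calc (0:ℝ) ≤ _ := key
    _ = _ := by
      refine Finset.sum_congr rfl fun k _ => Finset.sum_congr rfl fun l _ => ?_
      rw [eq1 k l]
end
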